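/- If 0 ≤ I < 1, then for all integers m ≥ 0 and 0 ≤ n < l, F_I(l,m,n) < 1; that is, for a finite time restriction the probability that the attacker's branch surpasses the honest branch is strictly smaller than one, even when 1/2 ≤ I < 1. -/

import Mathlib

/-- `pathCount i m` is the number of sequences `(s 1, …, s (m+2i+1))` with every entry `±1`,
exactly `i` entries equal to `+1` (hence `m+i+1` entries equal to `-1`), such that
`m + s 1 + ⋯ + s T ≥ 0` for every `T ≤ m + 2i` (the walk started at `m` first reaches `-1`
exactly at the final step). -/
noncomputable def pathCount (i m : ℕ) : ℕ :=
  Nat.card {s : Fin (m + 2 * i + 1) → ℤ //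
    (∀ t, s t = 1 ∨ s t = -1) ∧
    (Finset.univ.filter fun t => s t = 1).card = i ∧
    ∀ T : ℕ, T ≤ m + 2 * i →
      0 ≤ (m : ℤ) + ∑ t ∈ Finset.univ.filter (fun t : Fin (m + 2 * i + 1) => (t : ℕ) < T), s t}

/-- `F I l m n = ∑_{i=0}^{l-n-1} a(i,m) (1-I)^i I^(m+1+i)`, the probability that the
attacker's branch, lagging `m` blocks behind when the honest branch has already grown by `n`
blocks, surpasses the honest branch before the honest branch grows by `l` blocks. -/
noncomputable def F (I : ℝ) (l m n : ℕ) : ℝ :=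
  ∑ i ∈ Finset.range (l - n), (pathCount i m : ℝ) * (1 - I) ^ i * I ^ (m + 1 + i)

/-- The condition defining `pathCount`. -/
def Cond (i m : ℕ) (s : Fin (m + 2 * i + 1) → ℤ) : Prop :=
  (∀ t, s t = 1 ∨ s t = -1) ∧
  (Finset.univ.filter fun t => s t = 1).card = i ∧
  ∀ T : ℕ, T ≤ m + 2 * i →
    0 ≤ (m : ℤ) + ∑ t ∈ Finset.univ.filter (fun t : Fin (m + 2 * i + 1) => (t : ℕ) < T), s t

lemma pathCount_eq (i m : ℕ) : pathCount i m = Nat.card {s // Cond i m s} := rfl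

instance condFinite (i m : ℕ) : Finite {s // Cond i m s} := by
  apply Finite.of_injective (fun s : {s // Cond i m s} =>
    (fun t => decide (s.val t = 1) : Fin (m + 2 * i + 1) → Bool))
  intro s s' h
  apply Subtype.ext
  funext t
  have ht : decide (s.val t = 1) = decide (s'.val t = 1) := congrFun h t
  rcases s.2.1 t with h1 | h1 <;> rcases s'.2.1 t with h2 | h2 <;> rw [h1, h2] <;>
    simp [h1, h2] at ht

lemma sum_shift {N K : ℕ} (hK : K + 1 = N) (s : Fin N → ℤ) (tl : Fin K → ℤ)
    (htl : ∀ t : Fin K, tl t = s ⟨t.val + 1, by omega⟩) (T : ℕ) :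
    ∑ t ∈ Finset.univ.filter (fun t : Fin N => (t : ℕ) < T + 1), s t
      = s ⟨0, by omega⟩ + ∑ t ∈ Finset.univ.filter (fun t : Fin K => (t : ℕ) < T), tl t := by
  subst hK
  rw [Finset.sum_filter, Finset.sum_filter, Fin.sum_univ_succ]
  have h0 : ((0 : Fin (K + 1)) : ℕ) < T + 1 := by simp
  rw [if_pos h0]
  congr 1
  apply Finset.sum_congr rfl
  intro t _
  have hv : ((t.succ : Fin (K + 1)) : ℕ) = t.val + 1 := rfl
  have hsucc : t.succ = (⟨t.val + 1, by omega⟩ : Fin (K + 1)) := rfl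
  rw [htl t, ← hsucc, hv]
  simp [Nat.succ_lt_succ_iff]

lemma card_shift {N K : ℕ} (hK : K + 1 = N) (s : Fin N → ℤ) (tl : Fin K → ℤ)
    (htl : ∀ t : Fin K, tl t = s ⟨t.val + 1, by omega⟩) :
    (Finset.univ.filter fun t : Fin N => s t = 1).card
      = (if s ⟨0, by omega⟩ = 1 then 1 else 0)
        + (Finset.univ.filter fun t : Fin K => tl t = 1).card := by
  subst hK
  rw [Finset.card_filter, Finset.card_filter, Fin.sum_univ_succ]
  congr 1
  apply Finset.sum_congr rfl
  intro t _
  have hsucc : t.succ = (⟨t.val + 1, by omega⟩ : Fin (K + 1)) := rfl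
  rw [htl t, ← hsucc]

lemma filter_lt_card_le (n T : ℕ) :
    (Finset.univ.filter fun t : Fin n => (t : ℕ) < T).card ≤ T := by
  have := Finset.card_le_card_of_injOn (fun t : Fin n => (t : ℕ))
    (s := Finset.univ.filter fun t : Fin n => (t : ℕ) < T) (t := Finset.range T)
    (by intro a ha; simp at ha ⊢; exact ha)
    (by intro a _ b _ hab; exact Fin.val_injective hab)
  simpa using this

lemma pathCount_zero (m : ℕ) : pathCount 0 m = 1 := by
  rw [pathCount_eq]
  have hc : Cond 0 m (fun _ => (-1 : ℤ)) := by
    refine ⟨fun t => Or.inr rfl, by simp, fun T hT => ?_⟩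
    rw [Finset.sum_const]
    have := filter_lt_card_le (m + 2 * 0 + 1) T
    have hTm : T ≤ m := by omega
    rw [nsmul_eq_mul]
    have : ((Finset.univ.filter fun t : Fin (m + 2 * 0 + 1) => (t : ℕ) < T).card : ℤ) ≤ m := by
      exact_mod_cast le_trans this hTm
    omega
  haveI : Nonempty {s // Cond 0 m s} := ⟨⟨_, hc⟩⟩
  haveI : Subsingleton {s // Cond 0 m s} := by
    constructor
    intro a b
    apply Subtype.ext
    funext t
    have ha : a.val t = -1 := by
      rcases a.2.1 t with h | h
      · exfalso
        have hcard := a.2.2.1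
        have : t ∈ Finset.univ.filter fun t => a.val t = 1 := by simp [h]
        rw [Finset.card_eq_zero] at hcard
        rw [hcard] at this
        simp at this
      · exact h
    have hb : b.val t = -1 := by
      rcases b.2.1 t with h | h
      · exfalso
        have hcard := b.2.2.1
        have : t ∈ Finset.univ.filter fun t => b.val t = 1 := by simp [h]
        rw [Finset.card_eq_zero] at hcard
        rw [hcard] at this
        simp at this
      · exact h
    rw [ha, hb]
  exact Nat.card_unique

lemma head_tail_ext {N K : ℕ} (hK : K + 1 = N) (s s' : Fin N → ℤ)
    (h0 : s ⟨0, by omega⟩ = s' ⟨0, by omega⟩)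
    (htl : ∀ t : Fin K, s ⟨t.val + 1, by omega⟩ = s' ⟨t.val + 1, by omega⟩) : s = s' := by
  funext t
  rcases t with ⟨v, hv⟩
  cases v with
  | zero => exact h0
  | succ j => exact htl ⟨j, by omega⟩

lemma head_one (i : ℕ) (s : Fin (0 + 2 * (i + 1) + 1) → ℤ) (hs : Cond (i + 1) 0 s) :
    s ⟨0, by omega⟩ = 1 := by
  have hK : (1 + 2 * i + 1) + 1 = 0 + 2 * (i + 1) + 1 := by omega
  have htl : ∀ t : Fin (1 + 2 * i + 1),
      (fun t : Fin (1 + 2 * i + 1) => s ⟨t.val + 1, by omega⟩) t = s ⟨t.val + 1, by omega⟩ :=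
    fun t => rfl
  rcases hs.1 ⟨0, by omega⟩ with h | h
  · exact h
  · exfalso
    have h1 := hs.2.2 1 (by omega)
    have h2 := sum_shift hK s _ htl 0
    have h3 : (Finset.univ.filter (fun t : Fin (1 + 2 * i + 1) => (t : ℕ) < 0)) = ∅ := by
      apply Finset.filter_false_of_mem; intro t _; omega
    rw [h3, Finset.sum_empty, add_zero] at h2
    rw [show (0 : ℕ) + 1 = 1 from rfl] at h2
    rw [h2, h] at h1
    norm_num at h1

lemma tail_cond_B (i : ℕ) (s : Fin (0 + 2 * (i + 1) + 1) → ℤ) (hs : Cond (i + 1) 0 s) :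
    Cond i 1 (fun t : Fin (1 + 2 * i + 1) => s ⟨t.val + 1, by omega⟩) := by
  have hK : (1 + 2 * i + 1) + 1 = 0 + 2 * (i + 1) + 1 := by omega
  have htl : ∀ t : Fin (1 + 2 * i + 1),
      (fun t : Fin (1 + 2 * i + 1) => s ⟨t.val + 1, by omega⟩) t = s ⟨t.val + 1, by omega⟩ :=
    fun t => rfl
  have hs0 := head_one i s hs
  refine ⟨fun t => hs.1 _, ?_, ?_⟩
  · have hcard := card_shift hK s _ htl
    rw [hs.2.1, if_pos hs0] at hcard
    beta_reduce
    omega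
  · intro T hT
    have h1 := hs.2.2 (T + 1) (by omega)
    rw [sum_shift hK s _ htl T, hs0] at h1
    push_cast at h1 ⊢
    linarith

lemma pathCount_succ_zero (i : ℕ) : pathCount (i + 1) 0 ≤ pathCount i 1 := by
  rw [pathCount_eq, pathCount_eq]
  have hK : (1 + 2 * i + 1) + 1 = 0 + 2 * (i + 1) + 1 := by omega
  apply Nat.card_le_card_of_injective
    (fun s : {s // Cond (i + 1) 0 s} =>
      (⟨_, tail_cond_B i s.val s.2⟩ : {s // Cond i 1 s}))
  intro s s' hss
  have hv := congrArg Subtype.val hss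
  simp only at hv
  apply Subtype.ext
  apply head_tail_ext hK
  · rw [head_one i s.val s.2, head_one i s'.val s'.2]
  · exact fun t => congrFun hv t

lemma tail_cond_C1 (i m : ℕ) (s : Fin ((m + 1) + 2 * (i + 1) + 1) → ℤ)
    (hs : Cond (i + 1) (m + 1) s) (hs0 : s ⟨0, by omega⟩ = 1) :
    Cond i (m + 2) (fun t : Fin ((m + 2) + 2 * i + 1) => s ⟨t.val + 1, by omega⟩) := by
  have hK : ((m + 2) + 2 * i + 1) + 1 = (m + 1) + 2 * (i + 1) + 1 := by omega
  have htl : ∀ t : Fin ((m + 2) + 2 * i + 1),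
      (fun t : Fin ((m + 2) + 2 * i + 1) => s ⟨t.val + 1, by omega⟩) t = s ⟨t.val + 1, by omega⟩ :=
    fun t => rfl
  refine ⟨fun t => hs.1 _, ?_, ?_⟩
  · have hcard := card_shift hK s _ htl
    rw [hs.2.1, if_pos hs0] at hcard
    beta_reduce
    omega
  · intro T hT
    have h1 := hs.2.2 (T + 1) (by omega)
    rw [sum_shift hK s _ htl T, hs0] at h1
    push_cast at h1 ⊢
    linarith

lemma tail_cond_C2 (i m : ℕ) (s : Fin ((m + 1) + 2 * (i + 1) + 1) → ℤ)
    (hs : Cond (i + 1) (m + 1) s) (hs0 : s ⟨0, by omega⟩ = -1) :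
    Cond (i + 1) m (fun t : Fin (m + 2 * (i + 1) + 1) => s ⟨t.val + 1, by omega⟩) := by
  have hK : (m + 2 * (i + 1) + 1) + 1 = (m + 1) + 2 * (i + 1) + 1 := by omega
  have htl : ∀ t : Fin (m + 2 * (i + 1) + 1),
      (fun t : Fin (m + 2 * (i + 1) + 1) => s ⟨t.val + 1, by omega⟩) t = s ⟨t.val + 1, by omega⟩ :=
    fun t => rfl
  refine ⟨fun t => hs.1 _, ?_, ?_⟩
  · have hcard := card_shift hK s _ htl
    rw [hs.2.1, if_neg (by rw [hs0]; norm_num)] at hcard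
    beta_reduce
    omega
  · intro T hT
    have h1 := hs.2.2 (T + 1) (by omega)
    rw [sum_shift hK s _ htl T, hs0] at h1
    push_cast at h1 ⊢
    linarith

lemma pathCount_succ_succ (i m : ℕ) :
    pathCount (i + 1) (m + 1) ≤ pathCount i (m + 2) + pathCount (i + 1) m := by
  rw [pathCount_eq, pathCount_eq, pathCount_eq, ← Nat.card_sum]
  classical
  apply Nat.card_le_card_of_injective
    (fun s : {s // Cond (i + 1) (m + 1) s} =>
      if h : s.val ⟨0, by omega⟩ = 1 then
        (Sum.inl ⟨_, tail_cond_C1 i m s.val s.2 h⟩ :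
          {s // Cond i (m + 2) s} ⊕ {s // Cond (i + 1) m s})
      else
        Sum.inr ⟨_, tail_cond_C2 i m s.val s.2 (by
          rcases s.2.1 ⟨0, by omega⟩ with h' | h'
          · exact absurd h' h
          · exact h')⟩)
  intro s s' hss
  simp only at hss
  by_cases h : s.val ⟨0, by omega⟩ = 1 <;> by_cases h' : s'.val ⟨0, by omega⟩ = 1
  · rw [dif_pos h, dif_pos h'] at hss
    have hv := congrArg Subtype.val (Sum.inl.inj hss)
    simp only at hv
    apply Subtype.ext
    apply head_tail_ext (show ((m + 2) + 2 * i + 1) + 1 = (m + 1) + 2 * (i + 1) + 1 by omega)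
    · rw [h, h']
    · exact fun t => congrFun hv t
  · rw [dif_pos h, dif_neg h'] at hss
    exact absurd hss (by simp)
  · rw [dif_neg h, dif_pos h'] at hss
    exact absurd hss (by simp)
  · rw [dif_neg h, dif_neg h'] at hss
    have hv := congrArg Subtype.val (Sum.inr.inj hss)
    simp only at hv
    apply Subtype.ext
    apply head_tail_ext (show (m + 2 * (i + 1) + 1) + 1 = (m + 1) + 2 * (i + 1) + 1 by omega)
    · rcases s.2.1 ⟨0, by omega⟩ with h1 | h1
      · exact absurd h1 h
      · rcases s'.2.1 ⟨0, by omega⟩ with h2 | h2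
        · exact absurd h2 h'
        · rw [h1, h2]
    · exact fun t => congrFun hv t

lemma G_lt_one (I : ℝ) (hI0 : 0 ≤ I) (hI1 : I < 1) :
    ∀ N m : ℕ, ∑ i ∈ Finset.range N, (pathCount i m : ℝ) * (1 - I) ^ i * I ^ (m + 1 + i) < 1 := by
  have hp : 0 < 1 - I := by linarith
  have hnn : ∀ (M k : ℕ),
      0 ≤ ∑ i ∈ Finset.range k, (pathCount i M : ℝ) * (1 - I) ^ i * I ^ (M + 1 + i) := by
    intro M k
    apply Finset.sum_nonneg
    intro i _
    positivity
  intro N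
  induction N with
  | zero => intro m; simp
  | succ N IH =>
    intro m
    induction m with
    | zero =>
      rw [Finset.sum_range_succ']
      have h0 : (pathCount 0 0 : ℝ) * (1 - I) ^ 0 * I ^ (0 + 1 + 0) = I := by
        rw [pathCount_zero]; norm_num
      have hsum : ∑ i ∈ Finset.range N,
            (pathCount (i + 1) 0 : ℝ) * (1 - I) ^ (i + 1) * I ^ (0 + 1 + (i + 1))
          ≤ (1 - I) * ∑ i ∈ Finset.range N,
            (pathCount i 1 : ℝ) * (1 - I) ^ i * I ^ (1 + 1 + i) := by
        rw [Finset.mul_sum]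
        apply Finset.sum_le_sum
        intro i _
        have hc : (pathCount (i + 1) 0 : ℝ) ≤ (pathCount i 1 : ℝ) := by
          exact_mod_cast pathCount_succ_zero i
        have hw : (0 : ℝ) ≤ (1 - I) ^ (i + 1) * I ^ (0 + 1 + (i + 1)) := by positivity
        calc (pathCount (i + 1) 0 : ℝ) * (1 - I) ^ (i + 1) * I ^ (0 + 1 + (i + 1))
            = (pathCount (i + 1) 0 : ℝ) * ((1 - I) ^ (i + 1) * I ^ (0 + 1 + (i + 1))) := by ring
          _ ≤ (pathCount i 1 : ℝ) * ((1 - I) ^ (i + 1) * I ^ (0 + 1 + (i + 1))) :=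
              mul_le_mul_of_nonneg_right hc hw
          _ = (1 - I) * ((pathCount i 1 : ℝ) * (1 - I) ^ i * I ^ (1 + 1 + i)) := by ring
      rw [h0]
      have hG := IH 1
      have hGnn := hnn 1 N
      nlinarith [hsum]
    | succ m IHm =>
      rw [Finset.sum_range_succ']
      have hsum : ∑ i ∈ Finset.range N,
            (pathCount (i + 1) (m + 1) : ℝ) * (1 - I) ^ (i + 1) * I ^ (m + 1 + 1 + (i + 1))
          ≤ (1 - I) * (∑ i ∈ Finset.range N,
              (pathCount i (m + 2) : ℝ) * (1 - I) ^ i * I ^ (m + 2 + 1 + i))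
            + I * (∑ i ∈ Finset.range N,
              (pathCount (i + 1) m : ℝ) * (1 - I) ^ (i + 1) * I ^ (m + 1 + (i + 1))) := by
        rw [Finset.mul_sum, Finset.mul_sum, ← Finset.sum_add_distrib]
        apply Finset.sum_le_sum
        intro i _
        have hc : (pathCount (i + 1) (m + 1) : ℝ)
            ≤ (pathCount i (m + 2) : ℝ) + (pathCount (i + 1) m : ℝ) := by
          exact_mod_cast pathCount_succ_succ i m
        have hw : (0 : ℝ) ≤ (1 - I) ^ (i + 1) * I ^ (m + 1 + 1 + (i + 1)) := by positivity
        calc (pathCount (i + 1) (m + 1) : ℝ) * (1 - I) ^ (i + 1) * I ^ (m + 1 + 1 + (i + 1))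
            = (pathCount (i + 1) (m + 1) : ℝ)
                * ((1 - I) ^ (i + 1) * I ^ (m + 1 + 1 + (i + 1))) := by ring
          _ ≤ ((pathCount i (m + 2) : ℝ) + (pathCount (i + 1) m : ℝ))
                * ((1 - I) ^ (i + 1) * I ^ (m + 1 + 1 + (i + 1))) :=
              mul_le_mul_of_nonneg_right hc hw
          _ = (1 - I) * ((pathCount i (m + 2) : ℝ) * (1 - I) ^ i * I ^ (m + 2 + 1 + i))
              + I * ((pathCount (i + 1) m : ℝ) * (1 - I) ^ (i + 1) * I ^ (m + 1 + (i + 1))) := by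
              ring
      have hGm : ∑ i ∈ Finset.range N,
            (pathCount (i + 1) m : ℝ) * (1 - I) ^ (i + 1) * I ^ (m + 1 + (i + 1)) + I ^ (m + 1)
          = ∑ i ∈ Finset.range (N + 1), (pathCount i m : ℝ) * (1 - I) ^ i * I ^ (m + 1 + i) := by
        rw [Finset.sum_range_succ']
        congr 1
        rw [pathCount_zero]
        norm_num
      have hf0 : (pathCount 0 (m + 1) : ℝ) * (1 - I) ^ 0 * I ^ (m + 1 + 1 + 0) = I * I ^ (m + 1) := by
        rw [pathCount_zero]
        push_cast
        ring
      rw [hf0]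
      have h2 := IH (m + 2)
      have h3 := IHm
      have h4 := hnn (m + 2) N
      have h5 := hnn m N
      rw [← hGm] at h3
      nlinarith [hsum, h3]


/-- If `0 ≤ I < 1`, then for all `m ≥ 0` and `0 ≤ n < l`, `F_I(l,m,n) < 1`: for a finite
time restriction the catch-up probability is strictly smaller than one, even when
`1/2 ≤ I < 1`. -/
theorem F_lt_one (I : ℝ) (hI0 : 0 ≤ I) (hI1 : I < 1) (l m n : ℕ) (hnl : n < l) :
    F I l m n < 1 := by
  unfold F
  exact G_lt_one I hI0 hI1 (l - n) m
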